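/- Let f be strongly convex with modulus μ and have L-Lipschitz gradient, with unique minimizer x*. Then gradient descent with step size h = 2/(μ+L) satisfies ‖x_{k+1} − x*‖² ≤ ((L−μ)/(L+μ))²·‖x_k − x*‖² for all k ≥ 0. -/

import Mathlib

open scoped RealInnerProductSpace

section Aux

variable {E : Type*} [NormedAddCommGroup E] [InnerProductSpace ℝ E] [CompleteSpace E]

/-- Chain rule along a line for a function with a gradient everywhere. -/
lemma gd_line_deriv (φ : E → ℝ) (φ' : E → E) (hφ : ∀ z, HasGradientAt φ (φ' z) z)
    (a v : E) (t : ℝ) :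
    HasDerivAt (fun s : ℝ => φ (a + s • v)) ⟪φ' (a + t • v), v⟫ t := by
  have h1 : HasDerivAt (fun s : ℝ => a + s • v) v t := by
    simpa using ((hasDerivAt_id t).smul_const v).const_add a
  have h2 := (hφ (a + t • v)).hasFDerivAt.comp_hasDerivAt t h1
  simp only [InnerProductSpace.toDual_apply_apply] at h2
  exact h2

/-- Convexity-type lower bound from monotonicity of directional derivatives. -/
lemma gd_lower (φ : E → ℝ) (φ' : E → E)
    (hdir : ∀ a v t : _, HasDerivAt (fun s : ℝ => φ (a + s • v)) ⟪φ' (a + t • v), v⟫ t)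
    (hm : ∀ p q, 0 ≤ ⟪φ' p - φ' q, p - q⟫) (a b : E) :
    φ a + ⟪φ' a, b - a⟫ ≤ φ b := by
  set v := b - a with hv
  obtain ⟨c, hc, hslope⟩ := exists_hasDerivAt_eq_slope (fun s => φ (a + s • v))
    (fun t => ⟪φ' (a + t • v), v⟫) one_pos
    (fun s _ => (hdir a v s).continuousAt.continuousWithinAt)
    (fun t _ => hdir a v t)
  have hab : a + (1:ℝ) • v = b := by simp [hv]
  have ha0 : a + (0:ℝ) • v = a := by simp
  rw [hab, ha0] at hslope
  simp only [sub_zero, div_one] at hslope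
  have hmono := hm (a + c • v) a
  have hsub : (a + c • v) - a = c • v := by abel
  rw [hsub, inner_sub_left] at hmono
  simp only [inner_smul_right] at hmono
  have hc0 : 0 < c := hc.1
  have hle : ⟪φ' a, v⟫ ≤ ⟪φ' (a + c • v), v⟫ := by nlinarith [hmono]
  linarith [hslope ▸ hle]

/-- Descent-type upper bound from a quadratic upper bound on the gradient variation. -/
lemma gd_upper (φ : E → ℝ) (φ' : E → E) (M : ℝ)
    (hdir : ∀ a v t : _, HasDerivAt (fun s : ℝ => φ (a + s • v)) ⟪φ' (a + t • v), v⟫ t)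
    (hub : ∀ p q, ⟪φ' p - φ' q, p - q⟫ ≤ M * ‖p - q‖^2) (a b : E) :
    φ b ≤ φ a + ⟪φ' a, b - a⟫ + M / 2 * ‖b - a‖^2 := by
  set v := b - a with hv
  set ψ : ℝ → ℝ := fun t => φ (a + t • v) - (⟪φ' a, v⟫ * t + M / 2 * ‖v‖^2 * t^2) with hψ
  have hψd : ∀ t : ℝ, HasDerivAt ψ (⟪φ' (a + t • v), v⟫ - (⟪φ' a, v⟫ + M * ‖v‖^2 * t)) t := by
    intro t
    have h2 : HasDerivAt (fun t : ℝ => ⟪φ' a, v⟫ * t + M / 2 * ‖v‖^2 * t^2)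
        (⟪φ' a, v⟫ + M * ‖v‖^2 * t) t := by
      have ha : HasDerivAt (fun t : ℝ => ⟪φ' a, v⟫ * t) ⟪φ' a, v⟫ t := by
        simpa using (hasDerivAt_id t).const_mul ⟪φ' a, v⟫
      have hb : HasDerivAt (fun t : ℝ => M / 2 * ‖v‖^2 * t^2) (M / 2 * ‖v‖^2 * (2 * t)) t := by
        simpa using (hasDerivAt_pow 2 t).const_mul (M / 2 * ‖v‖^2)
      have := ha.add hb
      have e : ⟪φ' a, v⟫ + M * ‖v‖^2 * t = ⟪φ' a, v⟫ + M / 2 * ‖v‖^2 * (2 * t) := by ring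
      rw [e]; exact this
    exact (hdir a v t).sub h2
  obtain ⟨c, hc, hslope⟩ := exists_hasDerivAt_eq_slope ψ
    (fun t => ⟪φ' (a + t • v), v⟫ - (⟪φ' a, v⟫ + M * ‖v‖^2 * t)) one_pos
    (fun s _ => (hψd s).continuousAt.continuousWithinAt)
    (fun t _ => hψd t)
  have hc0 : 0 < c := hc.1
  -- derivative at c is nonpositive
  have hub' := hub (a + c • v) a
  have hsub : (a + c • v) - a = c • v := by abel
  rw [hsub, inner_sub_left, norm_smul, Real.norm_eq_abs, abs_of_pos hc0] at hub'
  simp only [inner_smul_right] at hub'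
  have hderiv_le : ⟪φ' (a + c • v), v⟫ - (⟪φ' a, v⟫ + M * ‖v‖^2 * c) ≤ 0 := by
    nlinarith [hub']
  rw [hslope] at hderiv_le
  have hab : a + (1:ℝ) • v = b := by simp [hv]
  have ha0 : a + (0:ℝ) • v = a := by simp
  have hab' : a + v = b := by simp [hv]
  have hψ1 : ψ 1 = φ b - (⟪φ' a, v⟫ + M / 2 * ‖v‖^2) := by simp [hψ, hab']
  have hψ0 : ψ 0 = φ a := by simp [hψ, ha0]
  rw [hψ1, hψ0, sub_zero, div_one] at hderiv_le
  linarith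

/-- Cocoercivity (Baillon–Haddad). -/
lemma gd_coco (φ : E → ℝ) (φ' : E → E) (M : ℝ) (hM : 0 < M)
    (hdir : ∀ a v t : _, HasDerivAt (fun s : ℝ => φ (a + s • v)) ⟪φ' (a + t • v), v⟫ t)
    (hm : ∀ p q, 0 ≤ ⟪φ' p - φ' q, p - q⟫)
    (hub : ∀ p q, ⟪φ' p - φ' q, p - q⟫ ≤ M * ‖p - q‖^2) (a b : E) :
    ‖φ' a - φ' b‖^2 ≤ M * ⟪φ' a - φ' b, a - b⟫ := by
  have key : ∀ p q : E, φ p + ⟪φ' p, q - p⟫ + ‖φ' q - φ' p‖^2 / (2 * M) ≤ φ q := by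
    intro p q
    set w := φ' q - φ' p with hw
    set z := q - (1 / M) • w with hz
    have h1 := gd_lower φ φ' hdir hm p z
    have h2 := gd_upper φ φ' M hdir hub q z
    have hzp : z - p = (q - p) - (1 / M) • w := by rw [hz]; abel
    have hzq : z - q = -((1 / M) • w) := by rw [hz]; abel
    rw [hzp, inner_sub_right, inner_smul_right] at h1
    rw [hzq, inner_neg_right, inner_smul_right, norm_neg, norm_smul, Real.norm_eq_abs,
      abs_of_pos (by positivity : (0:ℝ) < 1 / M)] at h2
    have hip : ⟪φ' q, w⟫ - ⟪φ' p, w⟫ = ‖w‖^2 := by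
      rw [← inner_sub_left, ← hw, real_inner_self_eq_norm_sq]
    have hM' : M ≠ 0 := ne_of_gt hM
    have hcomb := le_trans h1 h2
    have h3 : M / 2 * (1 / M * ‖w‖)^2 = ‖w‖^2 / (2 * M) := by
      field_simp
    have h4 : 1 / M * ⟪φ' q, w⟫ - 1 / M * ⟪φ' p, w⟫ = 2 * (‖w‖^2 / (2 * M)) := by
      rw [← mul_sub, hip]; field_simp
    rw [h3] at hcomb
    linarith [hcomb, h4]
  have k1 := key a b
  have k2 := key b a
  have hre : ‖φ' b - φ' a‖ = ‖φ' a - φ' b‖ := norm_sub_rev _ _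
  rw [hre] at k1
  have hba : (b : E) - a = -(a - b) := by abel
  rw [hba, inner_neg_right] at k1
  have hinner : ⟪φ' a - φ' b, a - b⟫ = ⟪φ' a, a - b⟫ - ⟪φ' b, a - b⟫ := inner_sub_left _ _ _
  have h2D : 2 * (‖φ' a - φ' b‖^2 / (2 * M)) ≤ ⟪φ' a - φ' b, a - b⟫ := by
    rw [hinner]; linarith
  have hmul := mul_le_mul_of_nonneg_left h2D (le_of_lt hM)
  have hN : M * (2 * (‖φ' a - φ' b‖^2 / (2 * M))) = ‖φ' a - φ' b‖^2 := by
    field_simp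
  linarith [hN ▸ hmul]

end Aux

/-- For `f ∈ S^{1,1}_{μ,L}`, gradient descent with `h = 2/(μ+L)` satisfies
`‖x_{k+1} − x*‖² ≤ ((L−μ)/(L+μ))²·‖x_k − x*‖²`. -/
theorem stmt2 {n : ℕ} (f : EuclideanSpace ℝ (Fin n) → ℝ)
    (f' : EuclideanSpace ℝ (Fin n) → EuclideanSpace ℝ (Fin n))
    (hf : ∀ x, HasGradientAt f (f' x) x)
    (μ L : ℝ) (hμ : 0 < μ) (hμL : μ ≤ L)
    (hsc : ∀ x y, μ * ‖x - y‖^2 ≤ ⟪f' x - f' y, x - y⟫)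
    (hLip : ∀ x y, ‖f' x - f' y‖ ≤ L * ‖x - y‖)
    (xstar : EuclideanSpace ℝ (Fin n))
    (hmin : ∀ y, f xstar ≤ f y)
    (huniq : ∀ z, (∀ y, f z ≤ f y) → z = xstar)
    (x : ℕ → EuclideanSpace ℝ (Fin n))
    (hiter : ∀ k, x (k+1) = x k - (2/(μ+L)) • f' (x k)) :
    ∀ k, ‖x (k+1) - xstar‖^2 ≤ ((L-μ)/(L+μ))^2 * ‖x k - xstar‖^2 := by
  -- the gradient vanishes at the minimizer
  have hstar : f' xstar = 0 := by
    have hloc : IsLocalMin f xstar := Filter.Eventually.of_forall hmin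
    have h0 := hloc.hasFDerivAt_eq_zero (hf xstar).hasFDerivAt
    have h1 := congrArg (InnerProductSpace.toDual ℝ (EuclideanSpace ℝ (Fin n))).symm h0
    simpa using h1
  -- directional derivatives of the tilted function g z = f z - μ/2 ⟪z,z⟫
  have hdirg : ∀ a v : EuclideanSpace ℝ (Fin n), ∀ t : ℝ,
      HasDerivAt (fun s : ℝ => f (a + s • v) - μ/2 * ⟪a + s • v, a + s • v⟫)
        ⟪f' (a + t • v) - μ • (a + t • v), v⟫ t := by
    intro a v t
    have h1 := gd_line_deriv f f' hf a v t
    have hline : HasDerivAt (fun s : ℝ => a + s • v) v t := by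
      simpa using ((hasDerivAt_id t).smul_const v).const_add a
    have h2 := (hline.inner ℝ hline).const_mul (μ/2)
    have h3 := h1.sub h2
    have e : ⟪f' (a + t • v) - μ • (a + t • v), v⟫ = ⟪f' (a + t • v), v⟫ - μ / 2 * (⟪a + t • v, v⟫ + ⟪v, a + t • v⟫) := by
      rw [inner_sub_left, real_inner_smul_left, real_inner_comm v (a + t • v)]
      ring
    rw [e]; exact h3
  -- monotonicity of the tilted gradient
  have hm : ∀ p q : EuclideanSpace ℝ (Fin n),
      0 ≤ ⟪(f' p - μ • p) - (f' q - μ • q), p - q⟫ := by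
    intro p q
    have hvec : (f' p - μ • p) - (f' q - μ • q) = (f' p - f' q) - μ • (p - q) := by
      rw [smul_sub]; abel
    rw [hvec, inner_sub_left, real_inner_smul_left, real_inner_self_eq_norm_sq]
    linarith [hsc p q]
  -- quadratic upper bound for the tilted gradient
  have hub : ∀ p q : EuclideanSpace ℝ (Fin n),
      ⟪(f' p - μ • p) - (f' q - μ • q), p - q⟫ ≤ (L - μ) * ‖p - q‖^2 := by
    intro p q
    have hvec : (f' p - μ • p) - (f' q - μ • q) = (f' p - f' q) - μ • (p - q) := by
      rw [smul_sub]; abel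
    rw [hvec, inner_sub_left, real_inner_smul_left, real_inner_self_eq_norm_sq]
    have h2 := real_inner_le_norm (f' p - f' q) (p - q)
    nlinarith [hLip p q, norm_nonneg (p - q), norm_nonneg (f' p - f' q)]
  -- the sharp interpolation inequality
  have hinterp : ∀ a b : EuclideanSpace ℝ (Fin n),
      μ * L * ‖a - b‖^2 + ‖f' a - f' b‖^2 ≤ (μ + L) * ⟪f' a - f' b, a - b⟫ := by
    intro a b
    rcases lt_or_eq_of_le hμL with hlt | heq
    · have hcoco := gd_coco (fun z => f z - μ/2 * ⟪z, z⟫) (fun z => f' z - μ • z)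
        (L - μ) (by linarith) hdirg hm hub a b
      have hvec : (f' a - μ • a) - (f' b - μ • b) = (f' a - f' b) - μ • (a - b) := by
        rw [smul_sub]; abel
      rw [hvec] at hcoco
      have hA : ‖(f' a - f' b) - μ • (a - b)‖^2
          = ‖f' a - f' b‖^2 - 2*μ*⟪f' a - f' b, a - b⟫ + μ^2*‖a - b‖^2 := by
        rw [norm_sub_sq_real, real_inner_smul_right, norm_smul, Real.norm_eq_abs,
          abs_of_pos hμ]
        ring
      have hB : ⟪(f' a - f' b) - μ • (a - b), a - b⟫
          = ⟪f' a - f' b, a - b⟫ - μ*‖a - b‖^2 := by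
        rw [inner_sub_left, real_inner_smul_left, real_inner_self_eq_norm_sq]
      rw [hA, hB] at hcoco
      nlinarith [hcoco]
    · subst heq
      nlinarith [hsc a b, hLip a b, norm_nonneg (f' a - f' b), norm_nonneg (a - b), hμ]
  -- conclusion
  intro k
  have hs : 0 < μ + L := by linarith
  have hne : μ + L ≠ 0 := ne_of_gt hs
  have hne' : L + μ ≠ 0 := by intro h; apply hne; linarith
  have h := hinterp (x k) xstar
  rw [hstar, sub_zero] at h
  have hcomm : ⟪x k - xstar, f' (x k)⟫ = ⟪f' (x k), x k - xstar⟫ :=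
    real_inner_comm _ _
  rw [hiter k]
  have hvec2 : x k - (2/(μ+L)) • f' (x k) - xstar
      = (x k - xstar) - (2/(μ+L)) • f' (x k) := by abel
  rw [hvec2, norm_sub_sq_real, real_inner_smul_right, norm_smul, Real.norm_eq_abs,
    abs_of_pos (by positivity : (0:ℝ) < 2/(μ+L))]
  have hs2 : (0:ℝ) < (μ+L)^2 := by positivity
  refine le_of_mul_le_mul_left ?_ hs2
  have e1 : (μ+L)^2 * (‖x k - xstar‖^2 - 2 * (2/(μ+L) * ⟪x k - xstar, f' (x k)⟫)
        + (2/(μ+L) * ‖f' (x k)‖)^2)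
      = (μ+L)^2 * ‖x k - xstar‖^2 - 4*(μ+L) * ⟪x k - xstar, f' (x k)⟫
        + 4 * ‖f' (x k)‖^2 := by
    field_simp
    ring
  have e2 : (μ+L)^2 * (((L-μ)/(L+μ))^2 * ‖x k - xstar‖^2)
      = (L-μ)^2 * ‖x k - xstar‖^2 := by
    field_simp
    ring
  rw [e1, e2]
  nlinarith [h, hcomm]
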